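/- arXiv:2207.14391 — 7 statements merged into one kernel-verified Lean document; each statement's English description precedes it below -/
import Mathlib

section
/- Let {X_t}_{t≥1} be a sequence of vectors in ℝ^d, let V ∈ ℝ^{d×d} be a positive definite matrix, and define V̄_t = V + Σ_{s=1}^{t} X_s X_sᵀ (with V̄_0 = V). Then for every n ≥ 1, log(det(V̄_n)/det(V)) ≤ Σ_{t=1}^{n} ‖X_t‖²_{V̄_{t-1}^{-1}}. -/
open Matrix

/-- Weighted norm `‖z‖_V = √(zᵀ V z)`. -/
noncomputable def wnorm {d : ℕ} (V : Matrix (Fin d) (Fin d) ℝ) (z : Fin d → ℝ) : ℝ :=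
  Real.sqrt (z ⬝ᵥ V.mulVec z)

lemma vecMulVec_self_posSemidef {d : ℕ} (u : Fin d → ℝ) :
    (vecMulVec u u).PosSemidef := by
  refine .of_dotProduct_mulVec_nonneg ?_ ?_
  · ext i j
    simp [Matrix.conjTranspose_apply, vecMulVec_apply, mul_comm]
  · intro x
    have : x ⬝ᵥ (vecMulVec u u).mulVec x = (∑ i, x i * u i) * (∑ j, u j * x j) := by
      simp only [dotProduct, mulVec, vecMulVec_apply, Finset.sum_mul, Finset.mul_sum]
      rw [Finset.sum_comm]
      congr 1; ext i; congr 1; ext j; ring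
    simp only [star_trivial]
    rw [this]
    have h2 : (∑ j, u j * x j) = (∑ i, x i * u i) :=
      Finset.sum_congr rfl fun i _ => mul_comm _ _
    rw [h2]
    exact mul_self_nonneg _

lemma det_step {d : ℕ} (A : Matrix (Fin d) (Fin d) ℝ) (hA : A.PosDef) (u : Fin d → ℝ) :
    (A + vecMulVec u u).det = A.det * (1 + u ⬝ᵥ A⁻¹.mulVec u) := by
  rw [vecMulVec_eq (Fin 1), Matrix.det_add_mul _ _ hA.det_pos.ne'.isUnit]
  congr 1
  rw [Matrix.det_unique]
  simp [Matrix.mul_apply, Matrix.replicateRow, Matrix.replicateCol, dotProduct, mulVec, Finset.mul_sum,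
    Finset.sum_mul]
  exact Finset.sum_comm.trans
    (Finset.sum_congr rfl fun i _ => Finset.sum_congr rfl fun j _ => by ring)

theorem stmt_1 {d : ℕ} (X : ℕ → Fin d → ℝ)
    (V : Matrix (Fin d) (Fin d) ℝ) (hV : V.PosDef)
    (Vbar : ℕ → Matrix (Fin d) (Fin d) ℝ)
    (hVbar : ∀ t, Vbar t = V + ∑ s ∈ Finset.Icc 1 t, vecMulVec (X s) (X s)) :
    ∀ n : ℕ, 1 ≤ n →
      Real.log ((Vbar n).det / V.det) ≤
        ∑ t ∈ Finset.Icc 1 n, (wnorm (Vbar (t - 1))⁻¹ (X t)) ^ 2 := by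
  have hpd : ∀ t, (Vbar t).PosDef := by
    intro t
    rw [hVbar t]
    refine hV.add_posSemidef ?_
    refine Finset.sum_induction _ _ (fun a b ha hb => ha.add hb) ?_ ?_
    · exact Matrix.PosSemidef.zero
    · intro s _; exact vecMulVec_self_posSemidef (X s)
  have hstep : ∀ t : ℕ, Vbar (t + 1) = Vbar t + vecMulVec (X (t+1)) (X (t+1)) := by
    intro t
    rw [hVbar (t+1), hVbar t, Finset.sum_Icc_succ_top (Nat.le_add_left 1 t), add_assoc]
  have key : ∀ n : ℕ, Real.log ((Vbar n).det / V.det) ≤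
      ∑ t ∈ Finset.Icc 1 n, (wnorm (Vbar (t - 1))⁻¹ (X t)) ^ 2 := by
    intro n
    induction n with
    | zero => simp [hVbar 0, div_self hV.det_pos.ne']
    | succ n ih =>
      set q : ℝ := X (n+1) ⬝ᵥ (Vbar n)⁻¹.mulVec (X (n+1)) with hq
      have hq0 : 0 ≤ q := by simpa only [star_trivial] using ((hpd n).inv.posSemidef).dotProduct_mulVec_nonneg (X (n+1))
      have hdet : (Vbar (n+1)).det = (Vbar n).det * (1 + q) := by
        rw [hstep n, det_step _ (hpd n)]
      rw [Finset.sum_Icc_succ_top (Nat.le_add_left 1 n)]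
      have hwn : (wnorm (Vbar ((n+1) - 1))⁻¹ (X (n+1))) ^ 2 = q := by
        simp only [Nat.add_sub_cancel, wnorm]
        exact Real.sq_sqrt hq0
      rw [hwn, hdet]
      have h1q : (0:ℝ) < 1 + q := by linarith
      have hlog : Real.log ((Vbar n).det * (1 + q) / V.det)
          = Real.log ((Vbar n).det / V.det) + Real.log (1 + q) := by
        rw [mul_div_right_comm,
          Real.log_mul (div_pos (hpd n).det_pos hV.det_pos).ne' h1q.ne']
      rw [hlog]
      have : Real.log (1 + q) ≤ q := by
        have := Real.log_le_sub_one_of_pos h1q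
        linarith
      linarith
  intro n _
  exact key n
end

section
/- Let {X_t}_{t≥1} be a sequence of vectors in ℝ^d with ‖X_t‖₂ ≤ L for all t, let V ∈ ℝ^{d×d} be a positive definite matrix, and define V̄_t = V + Σ_{s=1}^{t} X_s X_sᵀ (with V̄_0 = V). Then for every n ≥ 1, Σ_{t=1}^{n} min{1, ‖X_t‖²_{V̄_{t-1}^{-1}}} ≤ 2·(log det(V̄_n) − log det(V)) ≤ 2·(d·log((trace(V) + n·L²)/d) − log det(V)). -/
open Matrix

lemma vecMulVec_posSemidef {d : ℕ} (x : Fin d → ℝ) : (vecMulVec x x).PosSemidef := by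
  have h : vecMulVec x x = (replicateRow Unit x)ᴴ * replicateRow Unit x := by
    rw [conjTranspose_replicateRow, star_trivial, ← vecMulVec_eq]
  rw [h]
  exact posSemidef_conjTranspose_mul_self _

lemma min_le_two_log {u : ℝ} (hu : 0 ≤ u) : min 1 u ≤ 2 * Real.log (1 + u) := by
  have h1 : (0:ℝ) < 1 + u := by linarith
  have key : u / (1 + u) ≤ Real.log (1 + u) := by
    have h2 := Real.log_le_sub_one_of_pos (x := (1 + u)⁻¹) (by positivity)
    rw [Real.log_inv] at h2
    have h3 : 1 - (1 + u)⁻¹ = u / (1 + u) := by field_simp; ring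
    linarith
  rcases le_total u 1 with h | h
  · rw [min_eq_right h]
    have h4 : u / 2 ≤ u / (1 + u) :=
      div_le_div_of_nonneg_left hu h1 (by linarith)
    linarith
  · rw [min_eq_left h]
    have h2 : Real.log 2 ≤ Real.log (1 + u) := Real.log_le_log (by norm_num) (by linarith)
    have h3 := Real.log_two_gt_d9
    linarith

lemma trace_eq_sum_eigenvalues {d : ℕ} {A : Matrix (Fin d) (Fin d) ℝ} (hA : A.IsHermitian) :
    A.trace = ∑ i, hA.eigenvalues i := by
  simpa using hA.trace_eq_sum_eigenvalues

theorem stmt_2 {d : ℕ} (X : ℕ → Fin d → ℝ) (L : ℝ)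
    (hL : ∀ t, Real.sqrt (∑ i, X t i ^ 2) ≤ L)
    (V : Matrix (Fin d) (Fin d) ℝ) (hV : V.PosDef)
    (Vbar : ℕ → Matrix (Fin d) (Fin d) ℝ)
    (hVbar : ∀ t, Vbar t = V + ∑ s ∈ Finset.Icc 1 t, vecMulVec (X s) (X s)) :
    ∀ n : ℕ, 1 ≤ n →
      (∑ t ∈ Finset.Icc 1 n, min 1 ((wnorm (Vbar (t - 1))⁻¹ (X t)) ^ 2) ≤
          2 * (Real.log (Vbar n).det - Real.log V.det)) ∧
      2 * (Real.log (Vbar n).det - Real.log V.det) ≤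
        2 * (d * Real.log ((V.trace + n * L ^ 2) / d) - Real.log V.det) := by
  classical
  have hpsd : ∀ t, (∑ s ∈ Finset.Icc 1 t, vecMulVec (X s) (X s)).PosSemidef := by
    intro t
    exact Finset.sum_induction _ _ (fun a b ha hb => ha.add hb) Matrix.PosSemidef.zero
      (fun s _ => vecMulVec_posSemidef _)
  have hPD : ∀ t, (Vbar t).PosDef := fun t => by
    rw [hVbar t]; exact hV.add_posSemidef (hpsd t)
  have hVbar0 : Vbar 0 = V := by rw [hVbar]; simp
  set u : ℕ → ℝ := fun t => X t ⬝ᵥ (Vbar (t - 1))⁻¹ *ᵥ X t with hudef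
  have hu0 : ∀ t, 0 ≤ u t := by
    intro t
    have h := ((hPD (t - 1)).inv).posSemidef.dotProduct_mulVec_nonneg (X t)
    simpa [hudef] using h
  have hw : ∀ t, wnorm (Vbar (t - 1))⁻¹ (X t) ^ 2 = u t := by
    intro t
    have := Real.sq_sqrt (hu0 t)
    simpa [wnorm, hudef] using this
  have hdet : ∀ t, 1 ≤ t → (Vbar t).det = (Vbar (t - 1)).det * (1 + u t) := by
    intro t ht
    obtain ⟨m, rfl⟩ : ∃ m, t = m + 1 := ⟨t - 1, (Nat.succ_pred_eq_of_pos ht).symm⟩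
    have hsplit : Vbar (m + 1) = Vbar m + vecMulVec (X (m + 1)) (X (m + 1)) := by
      rw [hVbar, hVbar, Finset.sum_Icc_succ_top (Nat.succ_le_succ m.zero_le), add_assoc]
    have hA : IsUnit (Vbar m).det := (hPD m).det_pos.ne'.isUnit
    rw [Nat.add_sub_cancel, hsplit, vecMulVec_eq Unit, det_add_replicateCol_mul_replicateRow hA]
    congr 1
    rw [det_unique]
    simp [Matrix.add_apply, Matrix.one_apply, ← Matrix.replicateRow_vecMul, hudef, dotProduct_mulVec, ← Matrix.vecMul_vecMul, Matrix.mulVec_replicateCol_eq_const]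
  have hlog : ∀ n : ℕ, ∑ t ∈ Finset.Icc 1 n, Real.log (1 + u t) =
      Real.log (Vbar n).det - Real.log V.det := by
    intro n
    induction n with
    | zero => simp [hVbar0]
    | succ m ih =>
      rw [Finset.sum_Icc_succ_top (Nat.succ_le_succ m.zero_le), ih,
        hdet (m + 1) (Nat.succ_le_succ m.zero_le), Nat.add_sub_cancel]
      have h1 : (0:ℝ) < (Vbar m).det := (hPD m).det_pos
      have h2 : (0:ℝ) < 1 + u (m + 1) := by have := hu0 (m + 1); linarith
      rw [Real.log_mul h1.ne' h2.ne']
      ring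
  intro n hn
  constructor
  · calc ∑ t ∈ Finset.Icc 1 n, min 1 ((wnorm (Vbar (t - 1))⁻¹ (X t)) ^ 2)
        ≤ ∑ t ∈ Finset.Icc 1 n, 2 * Real.log (1 + u t) := by
          refine Finset.sum_le_sum fun t _ => ?_
          rw [hw t]; exact min_le_two_log (hu0 t)
      _ = 2 * ∑ t ∈ Finset.Icc 1 n, Real.log (1 + u t) := by rw [Finset.mul_sum]
      _ = 2 * (Real.log (Vbar n).det - Real.log V.det) := by rw [hlog n]
  · rcases Nat.eq_zero_or_pos d with hd | hd
    · subst hd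
      simp [Matrix.det_fin_zero]
    · have hdR : (0:ℝ) < (d:ℝ) := Nat.cast_pos.mpr hd
      -- trace bound
      have htr : (Vbar n).trace ≤ V.trace + n * L ^ 2 := by
        rw [hVbar n, trace_add, trace_sum]
        have hle : ∀ s ∈ Finset.Icc 1 n, (vecMulVec (X s) (X s)).trace ≤ L ^ 2 := by
          intro s _
          have h1 : (vecMulVec (X s) (X s)).trace = ∑ i, X s i ^ 2 := by
            simp [Matrix.trace, Matrix.vecMulVec_apply, sq]
          have hnn : (0:ℝ) ≤ ∑ i, X s i ^ 2 := Finset.sum_nonneg fun i _ => sq_nonneg _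
          have h2 : ∑ i, X s i ^ 2 ≤ L ^ 2 := by
            have := Real.sq_sqrt hnn
            nlinarith [hL s, Real.sqrt_nonneg (∑ i, X s i ^ 2)]
          linarith
        calc V.trace + ∑ s ∈ Finset.Icc 1 n, (vecMulVec (X s) (X s)).trace
            ≤ V.trace + ∑ _s ∈ Finset.Icc 1 n, L ^ 2 := by
              exact add_le_add_right (Finset.sum_le_sum hle) _
          _ = V.trace + n * L ^ 2 := by
              rw [Finset.sum_const, Nat.card_Icc]
              simp [nsmul_eq_mul]
      have herm := (hPD n).isHermitian
      set lam : Fin d → ℝ := herm.eigenvalues with hlam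
      have hpos : ∀ i, 0 < lam i := fun i => (hPD n).eigenvalues_pos i
      have htrsum : (Vbar n).trace = ∑ i, lam i := trace_eq_sum_eigenvalues herm
      have htrpos : 0 < (Vbar n).trace := by
        rw [htrsum]
        exact Finset.sum_pos (fun i _ => hpos i) (Finset.univ_nonempty_iff.mpr ⟨⟨0, hd⟩⟩)
      have hdetprod : (Vbar n).det = ∏ i, lam i := by
        simpa using herm.det_eq_prod_eigenvalues
      -- AM-GM
      have amgm : ∏ i, lam i ^ ((d:ℝ)⁻¹) ≤ ∑ i, (d:ℝ)⁻¹ * lam i := by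
        refine Real.geom_mean_le_arith_mean_weighted Finset.univ _ _
          (fun i _ => by positivity) ?_ (fun i _ => (hpos i).le)
        rw [Finset.sum_const, Finset.card_univ, Fintype.card_fin, nsmul_eq_mul]
        field_simp
      have hgm_pos : 0 < ∏ i, lam i ^ ((d:ℝ)⁻¹) :=
        Finset.prod_pos fun i _ => Real.rpow_pos_of_pos (hpos i) _
      have hsum_eq : ∑ i, (d:ℝ)⁻¹ * lam i = (Vbar n).trace / d := by
        rw [← Finset.mul_sum, ← htrsum]
        ring
      have hlog1 : Real.log (Vbar n).det ≤ d * Real.log ((Vbar n).trace / d) := by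
        have h := Real.log_le_log hgm_pos amgm
        rw [Real.log_prod (fun i _ => (Real.rpow_pos_of_pos (hpos i) _).ne')] at h
        simp_rw [Real.log_rpow (hpos _)] at h
        rw [← Finset.mul_sum, hsum_eq] at h
        have h2 : ∑ i, Real.log (lam i) ≤ d * Real.log ((Vbar n).trace / d) := by
          have := mul_le_mul_of_nonneg_left h hdR.le
          rwa [← mul_assoc, mul_inv_cancel₀ hdR.ne', one_mul] at this
        rw [hdetprod, Real.log_prod (fun i _ => (hpos i).ne')]
        exact h2
      have hlog2 : Real.log ((Vbar n).trace / d) ≤ Real.log ((V.trace + n * L ^ 2) / d) := by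
        apply Real.log_le_log (by positivity)
        gcongr
      have : Real.log (Vbar n).det ≤ d * Real.log ((V.trace + n * L ^ 2) / d) := by
        calc Real.log (Vbar n).det ≤ d * Real.log ((Vbar n).trace / d) := hlog1
          _ ≤ d * Real.log ((V.trace + n * L ^ 2) / d) :=
              mul_le_mul_of_nonneg_left hlog2 hdR.le
      linarith
end

section
/- Let λ > 0 and let V ∈ ℝ^{d×d} be a symmetric matrix such that V − λI is positive semidefinite (in particular V is positive definite). Let μ be a probability measure on a measurable space C, x a fixed action, and φ(x,·) : C → ℝ^d a μ-integrable map with ‖φ(x,c)‖₂ ≤ 1 for all c ∈ C; set ψ(x) := ∫ φ(x,c) dμ(c). Define S(c) := ‖ψ(x)‖_{V^{-1}} − ‖φ(x,c)‖_{V^{-1}}. Then ∫ S(c) dμ(c) ≤ 0 and |S(c)| ≤ 2·λ^{-1/2} for every c ∈ C. -/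
open Matrix MeasureTheory

private lemma aux_q (lam q Z yy : ℝ) (hlam : 0 < lam) (hZnn : 0 ≤ Z) (hZ1 : Z ≤ 1)
    (hlow : lam * yy ≤ q) (hyy : 0 ≤ yy) (hCS : q ^ 2 ≤ Z * yy) : q ≤ 1 / lam := by
  have hqnn : 0 ≤ q := le_trans (mul_nonneg hlam.le hyy) hlow
  rcases hqnn.lt_or_eq with hqpos | hq0
  · have h3 : lam * q * q ≤ Z * q := by nlinarith
    have h4 : lam * q ≤ Z := le_of_mul_le_mul_right (by linarith [h3]) hqpos
    rw [le_div_iff₀ hlam]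
    nlinarith
  · rw [← hq0]
    positivity

theorem stmt_10 {d : ℕ} (lam : ℝ) (hlam : 0 < lam)
    (V : Matrix (Fin d) (Fin d) ℝ) (hVsym : V.IsHermitian)
    (hVlam : (V - lam • (1 : Matrix (Fin d) (Fin d) ℝ)).PosSemidef)
    {C : Type*} [MeasurableSpace C] (μ : Measure C) [IsProbabilityMeasure μ]
    {X : Type*} (x : X) (φ : X → C → Fin d → ℝ)
    (hφint : Integrable (φ x) μ)
    (hφbound : ∀ c, Real.sqrt (∑ i, φ x c i ^ 2) ≤ 1)
    (ψ : X → Fin d → ℝ) (hψ : ψ x = ∫ c, φ x c ∂μ)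
    (S : C → ℝ) (hS : ∀ c, S c = wnorm V⁻¹ (ψ x) - wnorm V⁻¹ (φ x c)) :
    (∫ c, S c ∂μ) ≤ 0 ∧ ∀ c, |S c| ≤ 2 * lam ^ (-(1/2 : ℝ)) := by
  -- V is positive definite
  have hVpd : V.PosDef := by
    refine posDef_iff_dotProduct_mulVec.mpr ⟨hVsym, fun z hz => ?_⟩
    have h0 := hVlam.dotProduct_mulVec_nonneg z
    have h1 : star z ⬝ᵥ ((V - lam • (1 : Matrix (Fin d) (Fin d) ℝ)) *ᵥ z)
        = z ⬝ᵥ V *ᵥ z - lam * (z ⬝ᵥ z) := by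
      simp [sub_mulVec, dotProduct_sub, smul_mulVec, one_mulVec,
        dotProduct_smul, smul_eq_mul]
    have hzz : 0 < z ⬝ᵥ z := by
      have hnn : 0 ≤ z ⬝ᵥ z := by
        simp only [dotProduct, ← sq]
        positivity
      rcases hnn.lt_or_eq with h | h
      · exact h
      · exact absurd (dotProduct_self_eq_zero.mp h.symm) hz
    rw [h1] at h0
    simp only [star_trivial]
    nlinarith
  have hW : (V⁻¹).PosDef := hVpd.inv
  set W := V⁻¹ with hWdef
  -- square root of W
  set R := (open MatrixOrder in CFC.sqrt W) with hRdef
  have hRR : R * R = W := open MatrixOrder in CFC.sqrt_mul_sqrt_self W hW.posSemidef.nonneg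
  have hRsym : Rᵀ = R := by
    have : R.IsHermitian := by rw [hRdef]; exact open MatrixOrder in (CFC.sqrt_nonneg W).posSemidef.1
    simpa [Matrix.IsHermitian, Matrix.conjTranspose_eq_transpose_of_trivial] using this
  clear_value R
  clear hRdef
  -- the continuous linear map z ↦ R z into Euclidean space
  set f : (Fin d → ℝ) →L[ℝ] EuclideanSpace ℝ (Fin d) :=
    (EuclideanSpace.equiv (Fin d) ℝ).symm.toContinuousLinearMap.comp
      (LinearMap.toContinuousLinearMap R.mulVecLin) with hfdef
  have hfapply : ∀ (z : Fin d → ℝ) (i : Fin d), f z i = (R *ᵥ z) i := fun z i => rfl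
  have hquad : ∀ z : Fin d → ℝ, z ⬝ᵥ W *ᵥ z = (R *ᵥ z) ⬝ᵥ (R *ᵥ z) := by
    intro z
    conv_lhs => rw [← hRR]
    rw [← mulVec_mulVec, dotProduct_mulVec]
    congr 1
    rw [← Matrix.mulVec_transpose, hRsym]
  have key : ∀ z : Fin d → ℝ, wnorm W z = ‖f z‖ := by
    intro z
    rw [wnorm, hquad, EuclideanSpace.norm_eq]
    congr 1
    simp only [Real.norm_eq_abs, sq_abs, dotProduct, ← sq]
    exact Finset.sum_congr rfl fun i _ => by rw [hfapply]
  -- quadratic bound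
  have qbound : ∀ z : Fin d → ℝ, Real.sqrt (∑ i, z i ^ 2) ≤ 1 →
      wnorm W z ≤ lam ^ (-(1/2 : ℝ)) := by
    intro z hz
    set q := z ⬝ᵥ W *ᵥ z with hqdef
    set y := W *ᵥ z with hydef
    set Z := z ⬝ᵥ z with hZdef
    clear_value q y Z
    have hZeq : Z = ∑ i, z i ^ 2 := by simp [hZdef, dotProduct, sq]
    have hZnn : 0 ≤ Z := by rw [hZeq]; positivity
    have hZ1 : Z ≤ 1 := by
      rw [hZeq]
      nlinarith [Real.sq_sqrt (show (0:ℝ) ≤ ∑ i, z i ^ 2 by positivity),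
        Real.sqrt_nonneg (∑ i, z i ^ 2)]
    have hVy : V *ᵥ y = z := by
      rw [hydef, mulVec_mulVec, hWdef,
        Matrix.mul_nonsing_inv V (isUnit_iff_ne_zero.mpr hVpd.det_pos.ne'),
        one_mulVec]
    have hq_eq : q = z ⬝ᵥ y := hqdef
    have hyVy : y ⬝ᵥ V *ᵥ y = q := by
      rw [hVy, hq_eq, dotProduct_comm]
    have hlow : lam * (y ⬝ᵥ y) ≤ q := by
      have h0 := hVlam.dotProduct_mulVec_nonneg y
      have h1 : star y ⬝ᵥ ((V - lam • (1 : Matrix (Fin d) (Fin d) ℝ)) *ᵥ y)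
          = y ⬝ᵥ V *ᵥ y - lam * (y ⬝ᵥ y) := by
        simp [sub_mulVec, dotProduct_sub, smul_mulVec, one_mulVec,
          dotProduct_smul, smul_eq_mul]
      rw [h1, hyVy] at h0
      linarith
    have hyy : 0 ≤ y ⬝ᵥ y := by
      simp only [dotProduct, ← sq]; positivity
    have hqnn : 0 ≤ q := le_trans (mul_nonneg hlam.le hyy) hlow
    have hCS : q ^ 2 ≤ Z * (y ⬝ᵥ y) := by
      have h2 : (z ⬝ᵥ y) ^ 2 ≤ (∑ i, z i ^ 2) * (∑ i, y i ^ 2) := by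
        have h := Finset.sum_mul_sq_le_sq_mul_sq (Finset.univ : Finset (Fin d)) z y
        simpa [dotProduct] using h
      calc q ^ 2 = (z ⬝ᵥ y) ^ 2 := by rw [hq_eq]
        _ ≤ (∑ i, z i ^ 2) * (∑ i, y i ^ 2) := h2
        _ = Z * (y ⬝ᵥ y) := by
            rw [hZeq]; congr 1; simp [dotProduct, sq]
    have hq_le : q ≤ 1 / lam := aux_q lam q Z (y ⬝ᵥ y) hlam hZnn hZ1 hlow hyy hCS
    have hpow : lam ^ (-(1/2 : ℝ)) = Real.sqrt (1 / lam) := by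
      rw [show (1:ℝ)/lam = lam⁻¹ from one_div lam, Real.sqrt_inv,
        Real.rpow_neg hlam.le, ← Real.sqrt_eq_rpow]
    rw [wnorm, hpow, show z ⬝ᵥ W *ᵥ z = q by rw [hqdef, hydef]]
    exact Real.sqrt_le_sqrt hq_le
  -- ψ bound
  have he : ∀ v : Fin d → ℝ,
      ‖(EuclideanSpace.equiv (Fin d) ℝ).symm.toContinuousLinearMap v‖
        = Real.sqrt (∑ i, v i ^ 2) := by
    intro v
    rw [EuclideanSpace.norm_eq]
    congr 1
    exact Finset.sum_congr rfl fun i _ => by simp [Real.norm_eq_abs, sq_abs]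
  set e := (EuclideanSpace.equiv (Fin d) ℝ).symm.toContinuousLinearMap with hedef
  have hψb : Real.sqrt (∑ i, ψ x i ^ 2) ≤ 1 := by
    have heψ : e (ψ x) = ∫ c, e (φ x c) ∂μ := by
      rw [hψ, ContinuousLinearMap.integral_comp_comm e hφint]
    have hle : ‖e (ψ x)‖ ≤ ∫ _ : C, (1 : ℝ) ∂μ := by
      rw [heψ]
      exact norm_integral_le_of_norm_le (integrable_const 1)
        (Filter.Eventually.of_forall fun c => by rw [he]; exact hφbound c)
    rw [he] at hle
    simpa using hle
  -- integrability of the composed map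
  have hfint : Integrable (fun c => f (φ x c)) μ := f.integrable_comp hφint
  constructor
  · -- integral part
    have hSeq : ∀ c, S c = wnorm W (ψ x) - ‖f (φ x c)‖ := fun c => by
      rw [hS c, key (φ x c)]
    have hint : (∫ c, S c ∂μ)
        = wnorm W (ψ x) - ∫ c, ‖f (φ x c)‖ ∂μ := by
      rw [integral_congr_ae (Filter.Eventually.of_forall hSeq),
        integral_sub (integrable_const _) hfint.norm]
      simp
    have hJ : wnorm W (ψ x) ≤ ∫ c, ‖f (φ x c)‖ ∂μ := by
      rw [key]
      have hfψ : f (ψ x) = ∫ c, f (φ x c) ∂μ := by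
        rw [hψ, ContinuousLinearMap.integral_comp_comm f hφint]
      rw [hfψ]
      exact norm_integral_le_integral_norm _
    rw [hint]
    linarith
  · intro c
    rw [hS c]
    have ha : wnorm W (ψ x) ≤ lam ^ (-(1/2 : ℝ)) := qbound _ hψb
    have hb : wnorm W (φ x c) ≤ lam ^ (-(1/2 : ℝ)) := qbound _ (hφbound c)
    have ha0 : 0 ≤ wnorm W (ψ x) := Real.sqrt_nonneg _
    have hb0 : 0 ≤ wnorm W (φ x c) := Real.sqrt_nonneg _
    rw [abs_le]
    constructor <;> linarith
end

section
/- Let V ∈ ℝ^{d×d} be positive definite, β ≥ 0, θ̂ ∈ ℝ^d, and let B = {θ ∈ ℝ^d : ‖θ̂ − θ‖_V ≤ β}. Let X be a set of actions, ψ : X → ℝ^d, φ : X × C → ℝ^d, θ* ∈ ℝ^d with θ* ∈ B, and suppose (x, θ̃) ∈ X × B satisfies ⟨ψ(x), θ̃⟩ ≥ ⟨ψ(x'), θ'⟩ for all (x', θ') ∈ X × B (optimistic choice). Then for every x* ∈ X and every c ∈ C, ⟨θ*, φ(x*,c)⟩ − ⟨θ*, φ(x,c)⟩ ≤ 2β·(‖φ(x,c)‖_{V^{-1}}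 + S) + D, where D := ⟨θ*, φ(x*,c) − φ(x,c) − ψ(x*) + ψ(x)⟩ and S := ‖ψ(x)‖_{V^{-1}} − ‖φ(x,c)‖_{V^{-1}}. -/
open Matrix

lemma wnorm_key_facts {d : ℕ} (V : Matrix (Fin d) (Fin d) ℝ) (hV : V.PosDef) :
    (∀ a b : Fin d → ℝ, a ⬝ᵥ b ≤ wnorm V⁻¹ a * wnorm V b) ∧
    (∀ u v : Fin d → ℝ, wnorm V (u - v) ≤ wnorm V u + wnorm V v) := by
  letI nacg : NormedAddCommGroup (Fin d → ℝ) := Matrix.toNormedAddCommGroup V hV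
  letI snacg := nacg.toSeminormedAddCommGroup
  letI ips : @InnerProductSpace ℝ (Fin d → ℝ) _ snacg := Matrix.toInnerProductSpace V hV.posSemidef
  have hinner : ∀ u v : Fin d → ℝ, @inner ℝ _ ips.toInner u v = u ⬝ᵥ V *ᵥ v := fun u v => by
    show (V *ᵥ v) ⬝ᵥ star u = _
    rw [star_trivial, dotProduct_comm]
  have hwn : ∀ z, wnorm V z = @norm _ snacg.toNorm z := fun z => by
    rw [@norm_eq_sqrt_real_inner (Fin d → ℝ) snacg ips z, hinner]; rfl
  have hdet : IsUnit V.det := isUnit_iff_ne_zero.mpr hV.det_pos.ne'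
  have hVt : Vᵀ = V := by
    have := hV.isHermitian.eq
    rwa [conjTranspose_eq_transpose_of_trivial] at this
  have hsymm : V⁻¹ᵀ = V⁻¹ := by rw [transpose_nonsing_inv, hVt]
  have hVV : V * V⁻¹ = 1 := Matrix.mul_nonsing_inv V hdet
  have h1 : ∀ u v : Fin d → ℝ, @inner ℝ _ ips.toInner (V⁻¹ *ᵥ u) v = u ⬝ᵥ v := fun u v => by
    rw [hinner, Matrix.dotProduct_mulVec, Matrix.vecMul_mulVec, hsymm,
      Matrix.nonsing_inv_mul V hdet, Matrix.vecMul_one]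
  have h2 : ∀ u : Fin d → ℝ, @norm _ snacg.toNorm (V⁻¹ *ᵥ u) = wnorm V⁻¹ u := fun u => by
    rw [← hwn]
    unfold wnorm
    rw [Matrix.mulVec_mulVec, hVV, Matrix.one_mulVec, dotProduct_comm]
  constructor
  · intro a b
    rw [← h1 a b, ← h2, hwn]
    exact @real_inner_le_norm (Fin d → ℝ) snacg ips _ _
  · intro u v
    rw [hwn, hwn, hwn]
    exact @norm_sub_le (Fin d → ℝ) snacg.toSeminormedAddGroup u v

theorem stmt_12 {d : ℕ} {X C : Type*}
    (V : Matrix (Fin d) (Fin d) ℝ) (hV : V.PosDef)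
    (β : ℝ) (hβ : 0 ≤ β) (θhat : Fin d → ℝ)
    (B : Set (Fin d → ℝ)) (hB : B = {θ : Fin d → ℝ | wnorm V (θhat - θ) ≤ β})
    (ψ : X → Fin d → ℝ) (φ : X → C → Fin d → ℝ)
    (θstar : Fin d → ℝ) (hθstar : θstar ∈ B)
    (x : X) (θtil : Fin d → ℝ) (hθtil : θtil ∈ B)
    (hopt : ∀ (x' : X) (θ' : Fin d → ℝ), θ' ∈ B → ψ x' ⬝ᵥ θ' ≤ ψ x ⬝ᵥ θtil) :
    ∀ (xstar : X) (c : C),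
      θstar ⬝ᵥ φ xstar c - θstar ⬝ᵥ φ x c ≤
        2 * β * (wnorm V⁻¹ (φ x c) + (wnorm V⁻¹ (ψ x) - wnorm V⁻¹ (φ x c))) +
          θstar ⬝ᵥ (φ xstar c - φ x c - ψ xstar + ψ x) := by
  intro xstar c
  obtain ⟨hCS, htri⟩ := wnorm_key_facts V hV
  have hθstar' : wnorm V (θhat - θstar) ≤ β := by rw [hB] at hθstar; exact hθstar
  have hθtil' : wnorm V (θhat - θtil) ≤ β := by rw [hB] at hθtil; exact hθtil
  -- bound on ‖θtil - θstar‖_V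
  have hdiff : wnorm V (θtil - θstar) ≤ 2 * β := by
    have h : θtil - θstar = (θhat - θstar) - (θhat - θtil) := by ring_nf
    calc wnorm V (θtil - θstar) = wnorm V ((θhat - θstar) - (θhat - θtil)) := by rw [← h]
      _ ≤ wnorm V (θhat - θstar) + wnorm V (θhat - θtil) := htri _ _
      _ ≤ β + β := add_le_add hθstar' hθtil'
      _ = 2 * β := by ring
  have hkey : θstar ⬝ᵥ ψ xstar - θstar ⬝ᵥ ψ x ≤ 2 * β * wnorm V⁻¹ (ψ x) := by
    have h1 : θstar ⬝ᵥ ψ xstar ≤ ψ x ⬝ᵥ θtil := by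
      rw [dotProduct_comm]
      exact hopt xstar θstar hθstar
    have h2 : ψ x ⬝ᵥ θtil - ψ x ⬝ᵥ θstar ≤ 2 * β * wnorm V⁻¹ (ψ x) := by
      calc ψ x ⬝ᵥ θtil - ψ x ⬝ᵥ θstar = ψ x ⬝ᵥ (θtil - θstar) := by
            rw [dotProduct_sub]
        _ ≤ wnorm V⁻¹ (ψ x) * wnorm V (θtil - θstar) := hCS _ _
        _ ≤ wnorm V⁻¹ (ψ x) * (2 * β) := by
            exact mul_le_mul_of_nonneg_left hdiff (Real.sqrt_nonneg _)
        _ = 2 * β * wnorm V⁻¹ (ψ x) := by ring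
    have h3 : θstar ⬝ᵥ ψ x = ψ x ⬝ᵥ θstar := dotProduct_comm _ _
    linarith
  have hexp : θstar ⬝ᵥ (φ xstar c - φ x c - ψ xstar + ψ x) =
      θstar ⬝ᵥ φ xstar c - θstar ⬝ᵥ φ x c - θstar ⬝ᵥ ψ xstar + θstar ⬝ᵥ ψ x := by
    rw [dotProduct_add, dotProduct_sub, dotProduct_sub]
  rw [hexp]
  have : 2 * β * (wnorm V⁻¹ (φ x c) + (wnorm V⁻¹ (ψ x) - wnorm V⁻¹ (φ x c))) =
      2 * β * wnorm V⁻¹ (ψ x) := by ring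
  rw [this]
  linarith
end

section
/- Let A, B ∈ ℝ^{d×d} be symmetric positive definite matrices with A − B positive semidefinite. Then for every nonzero x ∈ ℝ^d, (xᵀAx)/(xᵀBx) ≤ det(A)/det(B); equivalently, (xᵀAx)·det(B) ≤ det(A)·(xᵀBx) for all x ∈ ℝ^d. -/
open Matrix Finset RealInnerProductSpace

lemma aux_eig_ge_one {d : ℕ} {C : Matrix (Fin d) (Fin d) ℝ} (hC : C.PosSemidef)
    (h1 : (C - 1).PosSemidef) (i : Fin d) : 1 ≤ hC.1.eigenvalues i := by
  set v : Fin d → ℝ := ⇑(hC.1.eigenvectorBasis i) with hv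
  have hvv : v ⬝ᵥ v = 1 := by
    have hn : ‖(hC.1.eigenvectorBasis i : EuclideanSpace ℝ (Fin d))‖ = 1 :=
      hC.1.eigenvectorBasis.orthonormal.1 i
    have h2 : (inner ℝ (hC.1.eigenvectorBasis i) (hC.1.eigenvectorBasis i) : ℝ) = 1 := by
      rw [real_inner_self_eq_norm_sq, hn]; norm_num
    rw [PiLp.inner_apply] at h2
    simpa [dotProduct, RCLike.inner_apply, ← sq, hv] using h2
  have h0 := h1.dotProduct_mulVec_nonneg v
  have hCv : C *ᵥ v = hC.1.eigenvalues i • v := hC.1.mulVec_eigenvectorBasis i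
  have he : star v ⬝ᵥ (C - 1) *ᵥ v = hC.1.eigenvalues i - 1 := by
    simp [sub_mulVec, hCv, dotProduct_sub, dotProduct_smul, hvv, star_trivial]
  rw [he] at h0
  linarith

lemma aux_quad_le {d : ℕ} {C : Matrix (Fin d) (Fin d) ℝ} (hC : C.PosSemidef)
    (h1 : (C - 1).PosSemidef) (y : Fin d → ℝ) :
    y ⬝ᵥ C *ᵥ y ≤ C.det * (y ⬝ᵥ y) := by
  have hH := hC.1
  set U : Matrix (Fin d) (Fin d) ℝ := (hH.eigenvectorUnitary : Matrix (Fin d) (Fin d) ℝ) with hU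
  set μ : Fin d → ℝ := hH.eigenvalues with hμ
  set z : Fin d → ℝ := Uᵀ *ᵥ y with hz
  have hdet : C.det = ∏ i, μ i := by simpa using hH.det_eq_prod_eigenvalues
  have hstarU : (star hH.eigenvectorUnitary : Matrix (Fin d) (Fin d) ℝ) = Uᵀ := by
    rw [hU, Matrix.star_eq_conjTranspose, conjTranspose_eq_transpose_of_trivial]
  have hspec : C = U * diagonal μ * Uᵀ := by
    rw [← hstarU]; simpa using hH.spectral_theorem
  have hUU : U * Uᵀ = 1 := by
    rw [← hstarU]; exact Unitary.coe_mul_star_self hH.eigenvectorUnitary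
  have hyz : y ⬝ᵥ C *ᵥ y = ∑ i, μ i * z i ^ 2 := by
    rw [hspec, ← mulVec_mulVec, ← mulVec_mulVec, dotProduct_mulVec (v := y) (A := U),
      ← mulVec_transpose, ← hz]
    simp only [mulVec_diagonal, dotProduct, mulVec, Pi.smul_apply]
    exact Finset.sum_congr rfl fun i _ => by
      rw [Finset.sum_eq_single i (fun b _ hb => by simp [Matrix.diagonal_apply_ne' μ hb])
        (fun h => absurd (Finset.mem_univ i) h)]
      simp [Matrix.diagonal_apply_eq]
      ring
  have hyy : y ⬝ᵥ y = ∑ i, z i ^ 2 := by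
    have h3 : z ⬝ᵥ z = y ⬝ᵥ y := by
      rw [hz, dotProduct_mulVec, vecMul_transpose, mulVec_mulVec, hUU, one_mulVec]
    rw [← h3]
    exact Finset.sum_congr rfl fun i _ => by ring
  rw [hyz, hyy, hdet, Finset.mul_sum]
  refine Finset.sum_le_sum fun i _ => ?_
  have hge : ∀ j, (1:ℝ) ≤ μ j := fun j => aux_eig_ge_one hC h1 j
  have hprod1 : (1:ℝ) ≤ ∏ j ∈ Finset.univ.erase i, μ j := by
    calc (1:ℝ) = ∏ _j ∈ Finset.univ.erase i, (1:ℝ) := Finset.prod_const_one.symm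
      _ ≤ _ := Finset.prod_le_prod (fun j _ => zero_le_one) (fun j _ => hge j)
  have hmono : μ i ≤ ∏ j, μ j := by
    rw [← Finset.mul_prod_erase Finset.univ μ (Finset.mem_univ i)]
    nlinarith [hge i]
  nlinarith [sq_nonneg (z i)]

open scoped MatrixOrder in
lemma aux_sqrt {d : ℕ} {B : Matrix (Fin d) (Fin d) ℝ} (hB : B.PosSemidef) :
    ∃ S : Matrix (Fin d) (Fin d) ℝ, S.PosSemidef ∧ S * S = B :=
  ⟨CFC.sqrt B, Matrix.nonneg_iff_posSemidef.mp (CFC.sqrt_nonneg B),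
    CFC.sqrt_mul_sqrt_self B hB.nonneg⟩

theorem stmt_13 {d : ℕ} (A B : Matrix (Fin d) (Fin d) ℝ)
    (hA : A.PosDef) (hB : B.PosDef) (hAB : (A - B).PosSemidef) :
    (∀ x : Fin d → ℝ, x ≠ 0 →
        (x ⬝ᵥ A.mulVec x) / (x ⬝ᵥ B.mulVec x) ≤ A.det / B.det) ∧
    (∀ x : Fin d → ℝ, (x ⬝ᵥ A.mulVec x) * B.det ≤ A.det * (x ⬝ᵥ B.mulVec x)) := by
  obtain ⟨S, hS, hSS⟩ := aux_sqrt hB.posSemidef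
  have hSH : Sᴴ = S := hS.1
  have hdetS : IsUnit S.det := by
    have : S.det * S.det = B.det := by rw [← det_mul, hSS]
    have hBd := hB.det_pos
    have : S.det ≠ 0 := by intro h; rw [h, mul_zero] at this; linarith
    exact this.isUnit
  have hSinv : S * S⁻¹ = 1 := mul_nonsing_inv S hdetS
  have hSinv' : S⁻¹ * S = 1 := nonsing_inv_mul S hdetS
  have hSinvH : (S⁻¹)ᴴ = S⁻¹ := by rw [conjTranspose_nonsing_inv, hSH]
  set C := S⁻¹ * A * S⁻¹ with hC
  have hCps : C.PosSemidef := by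
    have := hA.posSemidef.mul_mul_conjTranspose_same S⁻¹
    rwa [hSinvH] at this
  have hC1 : (C - 1).PosSemidef := by
    have h4 := hAB.mul_mul_conjTranspose_same S⁻¹
    rw [hSinvH] at h4
    have h6 : S⁻¹ * (A - B) * S⁻¹ = C - 1 := by
      rw [Matrix.mul_sub, Matrix.sub_mul, hC, ← hSS]
      congr 1
      have h7 : S⁻¹ * (S * S) * S⁻¹ = (S⁻¹ * S) * (S * S⁻¹) := by noncomm_ring
      rw [h7, hSinv', hSinv, Matrix.one_mul]
    rwa [h6] at h4
  have hdetC : C.det * B.det = A.det := by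
    have hB' : S.det * S.det = B.det := by rw [← det_mul, hSS]
    have h9 : C.det = S.det⁻¹ * A.det * S.det⁻¹ := by
      rw [hC, det_mul, det_mul, det_nonsing_inv]
      simp [Ring.inverse_eq_inv']
    have hne : S.det ≠ 0 := hdetS.ne_zero
    rw [h9, ← hB']
    field_simp
  have hA_eq : A = S * C * S := by
    rw [hC]
    have h8 : S * (S⁻¹ * A * S⁻¹) * S = (S * S⁻¹) * A * (S⁻¹ * S) := by noncomm_ring
    rw [h8, hSinv, hSinv', Matrix.one_mul, Matrix.mul_one]
  have hST : Sᵀ = S := by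
    rw [← Matrix.conjTranspose_eq_transpose_of_trivial]; exact hSH
  have hquadA : ∀ x : Fin d → ℝ, x ⬝ᵥ A *ᵥ x = (S *ᵥ x) ⬝ᵥ C *ᵥ (S *ᵥ x) := by
    intro x
    conv_lhs => rw [hA_eq]
    rw [← mulVec_mulVec, ← mulVec_mulVec, dotProduct_mulVec (v := x) (A := S),
      ← mulVec_transpose, hST]
  have hquadB : ∀ x : Fin d → ℝ, x ⬝ᵥ B *ᵥ x = (S *ᵥ x) ⬝ᵥ (S *ᵥ x) := by
    intro x
    conv_lhs => rw [← hSS]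
    rw [← mulVec_mulVec, dotProduct_mulVec (v := x) (A := S), ← mulVec_transpose, hST]
  have key : ∀ x : Fin d → ℝ, (x ⬝ᵥ A.mulVec x) * B.det ≤ A.det * (x ⬝ᵥ B.mulVec x) := by
    intro x
    have h5 := aux_quad_le hCps hC1 (S *ᵥ x)
    have hBd := hB.det_pos
    calc (x ⬝ᵥ A.mulVec x) * B.det = ((S *ᵥ x) ⬝ᵥ C *ᵥ (S *ᵥ x)) * B.det := by rw [hquadA]
      _ ≤ (C.det * ((S *ᵥ x) ⬝ᵥ (S *ᵥ x))) * B.det := by nlinarith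
      _ = A.det * (x ⬝ᵥ B.mulVec x) := by rw [hquadB, ← hdetC]; ring
  refine ⟨fun x hx => ?_, key⟩
  have hBx : 0 < x ⬝ᵥ B.mulVec x := by
    have := hB.dotProduct_mulVec_pos hx
    simpa using this
  rw [div_le_div_iff₀ hBx hB.det_pos]
  exact key x
end

section
/- Let T, R, B > 0, and let (ℓ_1, r_1), …, (ℓ_P, r_P) be pairs of nonnegative reals with ℓ_p > 0 for all p, Σ_{p=1}^{P} ℓ_p ≤ T, Σ_{p=1}^{P} r_p ≤ R, and ℓ_p · r_p ≥ B for every p. Then for every α > 0, P ≤ T/α + R·α/B; in particular, choosing α = √(TB/R) gives P ≤ 2·√(TR/B). -/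
theorem stmt_15 {P : ℕ} (T R B : ℝ) (hT : 0 < T) (hR : 0 < R) (hB : 0 < B)
    (ℓ r : Fin P → ℝ) (hℓpos : ∀ p, 0 < ℓ p) (hrnn : ∀ p, 0 ≤ r p)
    (hℓ : ∑ p, ℓ p ≤ T) (hr : ∑ p, r p ≤ R) (hprod : ∀ p, B ≤ ℓ p * r p) :
    (∀ α : ℝ, 0 < α → (P : ℝ) ≤ T / α + R * α / B) ∧
    (P : ℝ) ≤ 2 * Real.sqrt (T * R / B) := by
  have key : ∀ α : ℝ, 0 < α → (P : ℝ) ≤ T / α + R * α / B := by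
    intro α hα
    have h1 : ∀ p, (1 : ℝ) ≤ ℓ p / α + r p * α / B := by
      intro p
      rcases le_or_gt α (ℓ p) with h | h
      · have h2 : (1 : ℝ) ≤ ℓ p / α := (one_le_div hα).2 h
        have h3 : 0 ≤ r p * α / B := div_nonneg (mul_nonneg (hrnn p) hα.le) hB.le
        linarith
      · have h2 : B ≤ r p * α := by nlinarith [hprod p, hrnn p]
        have h3 : (1 : ℝ) ≤ r p * α / B := (one_le_div hB).2 h2
        have h4 : 0 ≤ ℓ p / α := div_nonneg (hℓpos p).le hα.le
        linarith
    have hsum : (P : ℝ) ≤ ∑ p, (ℓ p / α + r p * α / B) := by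
      calc (P : ℝ) = ∑ _p : Fin P, (1 : ℝ) := by simp
        _ ≤ _ := Finset.sum_le_sum fun p _ => h1 p
    have heq : ∑ p, (ℓ p / α + r p * α / B)
        = (∑ p, ℓ p) / α + (∑ p, r p) * α / B := by
      rw [Finset.sum_add_distrib, Finset.sum_div]
      congr 1
      simp_rw [mul_div_assoc]
      rw [← Finset.sum_mul]
    have hle : (∑ p, ℓ p) / α + (∑ p, r p) * α / B ≤ T / α + R * α / B := by
      gcongr
    linarith [hsum, heq.le, hle]
  refine ⟨key, ?_⟩
  set α := Real.sqrt (T * B / R) with hαdef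
  have hα : 0 < α := Real.sqrt_pos.2 (by positivity)
  have hα2 : α ^ 2 = T * B / R := Real.sq_sqrt (by positivity)
  have hRα : R * α ^ 2 = T * B := by rw [hα2]; field_simp
  have h1 : T / α = R * α / B := by
    field_simp
    nlinarith [hRα]
  have h2 : R * α / B = Real.sqrt (T * R / B) := by
    have : T * R / B = (R * α / B) ^ 2 := by
      field_simp
      linear_combination (-1 : ℝ) * hRα
    rw [this, Real.sqrt_sq (by positivity)]
  have := key α hα
  rw [h1, h2] at this
  linarith
end

section
/- Let A, B ∈ ℝ^{d×d} be symmetric positive definite matrices with B − A positive semidefinite (A ⪯ B) and det(B) ≤ 2·det(A). Then for every z ∈ ℝ^d, zᵀA^{-1}z ≤ 2·(zᵀB^{-1}z). -/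
open Matrix

theorem stmt_18 {d : ℕ} (A B : Matrix (Fin d) (Fin d) ℝ)
    (hA : A.PosDef) (hB : B.PosDef) (hAB : (B - A).PosSemidef)
    (hdet : B.det ≤ 2 * A.det) :
    ∀ z : Fin d → ℝ, z ⬝ᵥ A⁻¹.mulVec z ≤ 2 * (z ⬝ᵥ B⁻¹.mulVec z) := by
  classical
  have hBps := hB.posSemidef
  set S := (open scoped MatrixOrder in CFC.sqrt B) with hSdef
  have hS : S.PosSemidef := (open scoped MatrixOrder in (CFC.sqrt_nonneg B).posSemidef)
  have hSB : S * S = B := (open scoped MatrixOrder in CFC.sqrt_mul_sqrt_self B hBps.nonneg)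
  have hdetB : 0 < B.det := hB.det_pos
  have hdetA : 0 < A.det := hA.det_pos
  have hSdet : S.det * S.det = B.det := by rw [← det_mul, hSB]
  have hSdet0 : S.det ≠ 0 := by
    intro h; rw [h, mul_zero] at hSdet; exact hdetB.ne' hSdet.symm
  have hSu : IsUnit S.det := isUnit_iff_ne_zero.2 hSdet0
  have hSiH : (S⁻¹).IsHermitian := hS.1.inv
  have hSinv_mul : S⁻¹ * S = 1 := nonsing_inv_mul S hSu
  have hmul_Sinv : S * S⁻¹ = 1 := mul_nonsing_inv S hSu
  set N := S⁻¹ * A * S⁻¹ with hNdef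
  have hNps : N.PosSemidef := by
    have h := hA.posSemidef.mul_mul_conjTranspose_same S⁻¹
    rwa [hSiH.eq] at h
  have hHN := hNps.1
  set ν := hHN.eigenvalues with hν
  -- determinant of N
  have hdetSi : (S⁻¹).det * S.det = 1 := det_nonsing_inv_mul_det S hSu
  have hdetN : N.det * B.det = A.det := by
    have : N.det = (S⁻¹).det * A.det * (S⁻¹).det := by rw [hNdef, det_mul, det_mul]
    calc N.det * B.det = ((S⁻¹).det * S.det) * A.det * ((S⁻¹).det * S.det) := by
          rw [this, ← hSdet]; ring
      _ = A.det := by rw [hdetSi]; ring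
  have hdetNval : N.det = ∏ i, ν i := by
    simpa using hHN.det_eq_prod_eigenvalues
  have hNval : N.det = A.det / B.det := by
    rw [eq_div_iff hdetB.ne']; exact hdetN
  have hdetNpos : (1:ℝ)/2 ≤ N.det := by
    rw [hNval, le_div_iff₀ hdetB]; linarith
  -- 1 - N is PSD
  have hone : (1 : Matrix (Fin d) (Fin d) ℝ) - N = S⁻¹ * (B - A) * S⁻¹ := by
    have : S⁻¹ * B * S⁻¹ = 1 := by
      rw [← hSB, ← Matrix.mul_assoc, hSinv_mul, Matrix.one_mul, hmul_Sinv]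
    rw [Matrix.mul_sub, Matrix.sub_mul, this, hNdef]
  have h1N : ((1 : Matrix (Fin d) (Fin d) ℝ) - N).PosSemidef := by
    rw [hone]
    have h := hAB.mul_mul_conjTranspose_same S⁻¹
    rwa [hSiH.eq] at h
  -- eigenvalue bounds
  have hν0 : ∀ i, 0 ≤ ν i := hNps.eigenvalues_nonneg
  have hνpos : ∀ i, 0 < ν i := by
    intro i
    rcases (hν0 i).lt_or_eq with h | h
    · exact h
    · exfalso
      have : N.det = 0 := by
        rw [hdetNval]; exact Finset.prod_eq_zero (Finset.mem_univ i) h.symm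
      rw [this] at hdetNpos; norm_num at hdetNpos
  have hν1 : ∀ i, ν i ≤ 1 := by
    intro i
    set v : Fin d → ℝ := ⇑(hHN.eigenvectorBasis i) with hv
    have hNv : N *ᵥ v = ν i • v := hHN.mulVec_eigenvectorBasis i
    have hvv : v ⬝ᵥ v = 1 := by
      have hn := hHN.eigenvectorBasis.orthonormal.1 i
      rw [EuclideanSpace.norm_eq] at hn
      have h2 : ∑ j, ‖hHN.eigenvectorBasis i j‖ ^ 2 = 1 := by
        have := congrArg (· ^ 2) hn
        simpa [Real.sq_sqrt (Finset.sum_nonneg fun j _ => sq_nonneg _)] using this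
      simpa [dotProduct, Real.norm_eq_abs, sq_abs, sq] using h2
    have h0 := h1N.dotProduct_mulVec_nonneg v
    rw [star_trivial, sub_mulVec, one_mulVec, dotProduct_sub, hNv, dotProduct_smul,
      smul_eq_mul, hvv] at h0
    linarith
  have hνhalf : ∀ i, (1:ℝ)/2 ≤ ν i := by
    intro i
    have hprod : ∏ j, ν j ≤ ν i := by
      rw [← Finset.mul_prod_erase Finset.univ ν (Finset.mem_univ i)]
      have htail : ∏ j ∈ Finset.univ.erase i, ν j ≤ 1 :=
        Finset.prod_le_one (fun j _ => (hν0 j)) (fun j _ => hν1 j)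
      nlinarith [hνpos i]
    calc (1:ℝ)/2 ≤ N.det := hdetNpos
      _ = ∏ j, ν j := hdetNval
      _ ≤ ν i := hprod
  -- spectral decomposition of N
  set U : Matrix (Fin d) (Fin d) ℝ := ↑(hHN.eigenvectorUnitary) with hU
  have hUU : U * star U = 1 := mem_unitaryGroup_iff.mp hHN.eigenvectorUnitary.2
  have hUU' : star U * U = 1 := mem_unitaryGroup_iff'.mp hHN.eigenvectorUnitary.2
  have hspec : N = U * diagonal ν * star U := by
    simpa using hHN.spectral_theorem
  have hNinv : N⁻¹ = U * diagonal (fun i => (ν i)⁻¹) * star U := by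
    apply inv_eq_right_inv
    rw [hspec]
    calc (U * diagonal ν * star U) * (U * diagonal (fun i => (ν i)⁻¹) * star U)
        = U * (diagonal ν * ((star U * U) * diagonal (fun i => (ν i)⁻¹))) * star U := by
          simp only [Matrix.mul_assoc]
      _ = U * (diagonal ν * diagonal (fun i => (ν i)⁻¹)) * star U := by
          rw [hUU', Matrix.one_mul]
      _ = U * star U := by
          rw [diagonal_mul_diagonal]
          have : (fun i => ν i * (ν i)⁻¹) = fun _ => (1:ℝ) := by
            funext i; exact mul_inv_cancel₀ (hνpos i).ne'
          rw [this, diagonal_one, Matrix.mul_one]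
      _ = 1 := hUU
  have hkey : ((2:ℝ) • (1 : Matrix (Fin d) (Fin d) ℝ) - N⁻¹).PosSemidef := by
    have h2 : (2:ℝ) • (1 : Matrix (Fin d) (Fin d) ℝ) - N⁻¹
        = U * diagonal (fun i => 2 - (ν i)⁻¹) * star U := by
      have hd : diagonal (fun i : Fin d => 2 - (ν i)⁻¹)
          = diagonal (fun _ : Fin d => (2:ℝ)) - diagonal (fun i => (ν i)⁻¹) :=
        (diagonal_sub _ _).symm
      have hdc : diagonal (fun _ : Fin d => (2:ℝ)) = (2:ℝ) • (1 : Matrix (Fin d) (Fin d) ℝ) :=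
        (smul_one_eq_diagonal (2:ℝ)).symm
      rw [hd, Matrix.mul_sub, Matrix.sub_mul, ← hNinv]
      congr 1
      rw [hdc, Matrix.mul_smul, Matrix.mul_one, Matrix.smul_mul, hUU]
    rw [h2]
    have hdiag : (diagonal (fun i : Fin d => 2 - (ν i)⁻¹)).PosSemidef := by
      apply PosSemidef.diagonal
      intro i
      have h1 : (ν i)⁻¹ ≤ 2 := by
        rw [inv_le_comm₀ (hνpos i) (by norm_num)]
        simpa [one_div] using hνhalf i
      simp only [Pi.zero_apply]
      linarith
    have h := hdiag.mul_mul_conjTranspose_same U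
    rwa [← Matrix.star_eq_conjTranspose] at h
  -- transport back
  have hAinvmul : A * A⁻¹ = 1 := mul_nonsing_inv A (isUnit_iff_ne_zero.2 hdetA.ne')
  have hNinvSAS : N⁻¹ = S * A⁻¹ * S := by
    apply inv_eq_right_inv
    rw [hNdef]
    calc (S⁻¹ * A * S⁻¹) * (S * A⁻¹ * S)
        = S⁻¹ * (A * ((S⁻¹ * S) * A⁻¹)) * S := by simp only [Matrix.mul_assoc]
      _ = 1 := by rw [hSinv_mul, Matrix.one_mul, hAinvmul, Matrix.mul_one, hSinv_mul]
  have hSNS : S⁻¹ * N⁻¹ * S⁻¹ = A⁻¹ := by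
    rw [hNinvSAS]
    calc S⁻¹ * (S * A⁻¹ * S) * S⁻¹ = (S⁻¹ * S) * (A⁻¹ * (S * S⁻¹)) := by
          simp only [Matrix.mul_assoc]
      _ = A⁻¹ := by rw [hSinv_mul, hmul_Sinv, Matrix.one_mul, Matrix.mul_one]
  have hBinv : B⁻¹ = S⁻¹ * S⁻¹ := by rw [← hSB, Matrix.mul_inv_rev]
  have h3 : (2:ℝ) • B⁻¹ - A⁻¹
      = S⁻¹ * ((2:ℝ) • (1 : Matrix (Fin d) (Fin d) ℝ) - N⁻¹) * S⁻¹ := by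
    rw [Matrix.mul_sub, Matrix.sub_mul, hSNS]
    congr 1
    rw [Matrix.mul_smul, Matrix.mul_one, smul_mul_assoc, hBinv]
  have hP : ((2:ℝ) • B⁻¹ - A⁻¹).PosSemidef := by
    rw [h3]
    have h := hkey.mul_mul_conjTranspose_same S⁻¹
    rwa [hSiH.eq] at h
  intro z
  have h0 := hP.dotProduct_mulVec_nonneg z
  rw [star_trivial, sub_mulVec, smul_mulVec, dotProduct_sub, dotProduct_smul,
    smul_eq_mul] at h0
  linarith
end
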